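/- Let X be a Banach space over ℝ and κ an uncountable regular cardinal. Suppose that for every family {Y_σ}_{σ<κ} of nonempty closed affine subspaces of X with Y_β ⊆ Y_α whenever α < β < κ, the intersection ⋂_{σ<κ} Y_σ is nonempty. Then for every family {Z_σ}_{σ<κ} of closed linear subspaces of X with Z_β ⊊ Z_α whenever α < β < κ and ⋂_{σ<κ} Z_σ = {0}, the set ⋂_{σ<κ} (B_X + Z_σ) is bounded, where B_X is the closed unit ball of X. -/

import Mathlib

open Set Cardinal Pointwise Metric Filter

section helpers

variable {X : Type*} [NormedAddCommGroup X] [NormedSpace ℝ X]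

private lemma myInfDist_add_le' (Z : Submodule ℝ X) {z : X} (hz : z ∈ Z) (x : X) :
    infDist (x + z) (Z : Set X) ≤ infDist x (Z : Set X) := by
  apply le_of_forall_pos_le_add
  intro ε hε
  obtain ⟨y, hy, hxy⟩ := (infDist_lt_iff (⟨0, Z.zero_mem⟩ : (Z : Set X).Nonempty)).1
    (lt_add_of_pos_right (infDist x (Z : Set X)) hε)
  calc infDist (x + z) (Z : Set X) ≤ dist (x + z) (y + z) :=
        infDist_le_dist_of_mem (Z.add_mem hy hz)
    _ = dist x y := dist_add_right x y z
    _ ≤ _ := hxy.le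

private lemma myInfDist_add_mem (Z : Submodule ℝ X) {z : X} (hz : z ∈ Z) (x : X) :
    infDist (x + z) (Z : Set X) = infDist x (Z : Set X) := by
  refine le_antisymm (myInfDist_add_le' Z hz x) ?_
  have := myInfDist_add_le' Z (Z.neg_mem hz) (x + z)
  simpa using this

private lemma myInfDist_neg (Z : Submodule ℝ X) (x : X) :
    infDist (-x) (Z : Set X) = infDist x (Z : Set X) := by
  have key : ∀ w : X, infDist (-w) (Z : Set X) ≤ infDist w (Z : Set X) := by
    intro w
    apply le_of_forall_pos_le_add
    intro ε hε
    obtain ⟨y, hy, hxy⟩ := (infDist_lt_iff (⟨0, Z.zero_mem⟩ : (Z : Set X).Nonempty)).1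
      (lt_add_of_pos_right (infDist w (Z : Set X)) hε)
    calc infDist (-w) (Z : Set X) ≤ dist (-w) (-y) := infDist_le_dist_of_mem (Z.neg_mem hy)
      _ = dist w y := by rw [dist_neg_neg]
      _ ≤ _ := hxy.le
  refine le_antisymm (key x) ?_
  have := key (-x)
  simpa using this

private lemma myInfDist_add (Z : Submodule ℝ X) (a b : X) :
    infDist (a + b) (Z : Set X) ≤ infDist a (Z : Set X) + infDist b (Z : Set X) := by
  apply le_of_forall_pos_le_add
  intro ε hε
  have hne : (Z : Set X).Nonempty := ⟨0, Z.zero_mem⟩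
  obtain ⟨y, hy, hay⟩ := (infDist_lt_iff hne).1
    (lt_add_of_pos_right (infDist a (Z : Set X)) (half_pos hε))
  obtain ⟨w, hw, hbw⟩ := (infDist_lt_iff hne).1
    (lt_add_of_pos_right (infDist b (Z : Set X)) (half_pos hε))
  calc infDist (a + b) (Z : Set X) ≤ dist (a + b) (y + w) :=
        infDist_le_dist_of_mem (Z.add_mem hy hw)
    _ ≤ dist a y + dist b w := dist_add_add_le a b y w
    _ ≤ _ := by linarith

private lemma myInfDist_smul (Z : Submodule ℝ X) (c : ℝ) (x : X) :
    infDist (c • x) (Z : Set X) ≤ ‖c‖ * infDist x (Z : Set X) := by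
  rcases eq_or_ne c 0 with rfl | hc
  · simp [infDist_zero_of_mem Z.zero_mem]
  apply le_of_forall_pos_le_add
  intro ε hε
  have hc' : (0 : ℝ) < ‖c‖ := norm_pos_iff.2 hc
  obtain ⟨y, hy, hxy⟩ := (infDist_lt_iff (⟨0, Z.zero_mem⟩ : (Z : Set X).Nonempty)).1
    (lt_add_of_pos_right (infDist x (Z : Set X)) (div_pos hε hc'))
  calc infDist (c • x) (Z : Set X) ≤ dist (c • x) (c • y) :=
        infDist_le_dist_of_mem (Z.smul_mem c hy)
    _ = ‖c‖ * dist x y := by rw [dist_smul₀]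
    _ ≤ ‖c‖ * (infDist x (Z : Set X) + ε / ‖c‖) := by
        exact mul_le_mul_of_nonneg_left hxy.le hc'.le
    _ = _ := by field_simp

end helpers

private def SynSp (X : Type*) : Type _ := X

private theorem exists_bound_of_complete_norm {X : Type*} [NormedAddCommGroup X]
    [NormedSpace ℝ X] [CompleteSpace X] (f : AddGroupNorm X)
    (hsmul : ∀ (c : ℝ) (x : X), f (c • x) ≤ ‖c‖ * f x)
    (hle : ∀ x, f x ≤ ‖x‖)
    (hcomp : ∀ u : ℕ → X, (∀ N n m, N ≤ n → N ≤ m → f (u n - u m) < 2 * (2⁻¹ : ℝ) ^ N) →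
      ∃ y : X, ∀ n : ℕ, f (u n - y) ≤ 8 * (2⁻¹ : ℝ) ^ n) :
    ∃ C : ℝ, 0 < C ∧ ∀ x, ‖x‖ ≤ C * f x := by
  letI : NormedAddCommGroup (SynSp X) := f.toNormedAddCommGroup
  letI : Module ℝ (SynSp X) := inferInstanceAs (Module ℝ X)
  letI : NormedSpace ℝ (SynSp X) := ⟨fun c x => hsmul c x⟩
  have hdist : ∀ a b : SynSp X, dist a b = f ((a : X) - (b : X)) := fun a b => by
    have h := map_neg_eq_map f ((a : X) - (b : X))
    rw [neg_sub, sub_eq_neg_add] at h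
    exact h
  haveI : CompleteSpace (SynSp X) := by
    apply Metric.complete_of_convergent_controlled_sequences
      (fun N => 2 * (2⁻¹ : ℝ) ^ N) (fun N => by positivity)
    intro u hu
    obtain ⟨y, hy⟩ := hcomp (fun n => (u n : X)) (fun N n m hn hm => by
      have := hu N n m hn hm; rwa [hdist] at this)
    refine ⟨(id y : SynSp X), ?_⟩
    rw [tendsto_iff_dist_tendsto_zero]
    have hb : ∀ n : ℕ, dist (u n) y ≤ 8 * (2⁻¹ : ℝ) ^ n := fun n => by
      exact (hdist _ _).trans_le (hy n)
    have h8 : Tendsto (fun n : ℕ => 8 * (2⁻¹ : ℝ) ^ n) atTop (nhds (8 * 0)) :=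
      (tendsto_pow_atTop_nhds_zero_of_lt_one (by norm_num) (by norm_num)).const_mul 8
    rw [mul_zero] at h8
    exact squeeze_zero (fun n => dist_nonneg) hb h8
  let e : X ≃ₗ[ℝ] SynSp X :=
    { toFun := fun x => x
      map_add' := fun _ _ => rfl
      map_smul' := fun _ _ => rfl
      invFun := fun x => x
      left_inv := fun _ => rfl
      right_inv := fun _ => rfl }
  let L : X →L[ℝ] SynSp X :=
    LinearMap.mkContinuous e.toLinearMap 1 (fun x => by
      rw [one_mul]
      exact hle x)
  have hinj : LinearMap.ker (L : X →ₗ[ℝ] SynSp X) = ⊥ := by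
    rw [LinearMap.ker_eq_bot']
    intro m hm
    exact hm
  have hsurj : LinearMap.range (L : X →ₗ[ℝ] SynSp X) = ⊤ := by
    rw [LinearMap.range_eq_top]
    exact fun y => ⟨y, rfl⟩
  let E := ContinuousLinearEquiv.ofBijective L hinj hsurj
  refine ⟨max ‖(E.symm : SynSp X →L[ℝ] X)‖ 1, lt_of_lt_of_le one_pos (le_max_right _ _),
    fun x => ?_⟩
  have h1 : E.symm (L x) = x := ContinuousLinearEquiv.ofBijective_symm_apply_apply L hinj hsurj x
  calc ‖x‖ = ‖(E.symm : SynSp X →L[ℝ] X) (L x)‖ := by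
        rw [show ((E.symm : SynSp X →L[ℝ] X) (L x)) = x from h1]
    _ ≤ ‖(E.symm : SynSp X →L[ℝ] X)‖ * ‖L x‖ := ContinuousLinearMap.le_opNorm _ _
    _ ≤ max ‖(E.symm : SynSp X →L[ℝ] X)‖ 1 * f x := by
        have hLx : ‖L x‖ = f x := rfl
        rw [hLx]
        exact mul_le_mul_of_nonneg_right (le_max_left _ _) (apply_nonneg f x)

/-- If every nested long family of nonempty closed affine subspaces of `X` has nonempty
intersection, then `⋂ (B_X + Z_σ)` is bounded for every strictly decreasing long family of
closed subspaces with trivial intersection. -/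
theorem classB_of_affine_intersection_property (X : Type*) [NormedAddCommGroup X]
    [NormedSpace ℝ X] [CompleteSpace X]
    (κ : Cardinal) (hκ : Cardinal.aleph0 < κ) (hreg : κ.IsRegular)
    (hcap : ∀ Y : {σ : Ordinal // σ < κ.ord} → Set X,
      (∀ σ, ∃ (v : X) (Z : Submodule ℝ X), IsClosed (Z : Set X) ∧
        Y σ = (v + ·) '' (Z : Set X)) →
      (∀ α β, α < β → Y β ⊆ Y α) → (⋂ σ, Y σ).Nonempty)
    (Z : {σ : Ordinal // σ < κ.ord} → Submodule ℝ X)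
    (hclosed : ∀ σ, IsClosed (Z σ : Set X))
    (hnest : ∀ α β, α < β → Z β < Z α)
    (hinter : ⋂ σ, (Z σ : Set X) = {0}) :
    Bornology.IsBounded (⋂ σ, (Metric.closedBall (0 : X) 1 + (Z σ : Set X))) := by
  classical
  haveI hneι : Nonempty {σ : Ordinal // σ < κ.ord} := by
    refine ⟨⟨0, ?_⟩⟩
    rw [← Cardinal.ord_zero]
    exact Cardinal.ord_lt_ord.2 (lt_trans Cardinal.aleph0_pos hκ)
  set fn : X → ℝ := fun x => ⨆ σ, infDist x (Z σ : Set X) with hfn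
  have hbdd : ∀ x : X, BddAbove (Set.range fun σ => infDist x (Z σ : Set X)) := by
    intro x
    refine ⟨‖x‖, ?_⟩
    rintro r ⟨σ, rfl⟩
    calc infDist x (Z σ : Set X) ≤ dist x 0 := infDist_le_dist_of_mem (Z σ).zero_mem
      _ = ‖x‖ := dist_zero_right x
  have hdle : ∀ (x : X) σ, infDist x (Z σ : Set X) ≤ fn x := fun x σ => le_ciSup (hbdd x) σ
  have hfle : ∀ x, fn x ≤ ‖x‖ := fun x => ciSup_le fun σ =>
    (infDist_le_dist_of_mem (Z σ).zero_mem).trans (dist_zero_right x).le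
  let F : AddGroupNorm X :=
  { toFun := fn
    map_zero' := by
      have h0 : ∀ σ, infDist (0 : X) (Z σ : Set X) = 0 := fun σ =>
        infDist_zero_of_mem (Z σ).zero_mem
      simp [hfn, h0]
    add_le' := fun x y => ciSup_le fun σ =>
      (myInfDist_add (Z σ) x y).trans (add_le_add (hdle x σ) (hdle y σ))
    neg' := fun x => iSup_congr fun σ => myInfDist_neg (Z σ) x
    eq_zero_of_map_eq_zero' := fun x hx => by
      have hx0 : x ∈ ⋂ σ, (Z σ : Set X) := by
        refine mem_iInter.2 fun σ => ?_
        have h1 : infDist x (Z σ : Set X) = 0 :=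
          le_antisymm (le_of_le_of_eq (hdle x σ) hx) infDist_nonneg
        exact ((hclosed σ).mem_iff_infDist_zero ⟨0, (Z σ).zero_mem⟩).2 h1
      rw [hinter] at hx0
      exact hx0 }
  have hFdef : ∀ x : X, F x = fn x := fun _ => rfl
  -- completeness of the norm `F`
  have hcomp : ∀ u : ℕ → X, (∀ N n m, N ≤ n → N ≤ m → F (u n - u m) < 2 * (2⁻¹ : ℝ) ^ N) →
      ∃ y : X, ∀ n : ℕ, F (u n - y) ≤ 8 * (2⁻¹ : ℝ) ^ n := by
    intro u hu
    have hsel : ∀ (σ : {σ : Ordinal // σ < κ.ord}) (n : ℕ),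
        ∃ z ∈ (Z σ : Set X), dist (u (n + 1) - u n) z < 3 * (2⁻¹ : ℝ) ^ n := by
      intro σ n
      have h2 : F (u (n + 1) - u n) < 2 * (2⁻¹ : ℝ) ^ n := hu n (n + 1) n (Nat.le_succ n) le_rfl
      have h1 : infDist (u (n + 1) - u n) (Z σ : Set X) < 3 * (2⁻¹ : ℝ) ^ n := by
        have h3 : (2 : ℝ) * 2⁻¹ ^ n ≤ 3 * 2⁻¹ ^ n := by
          have : (0:ℝ) ≤ 2⁻¹ ^ n := by positivity
          linarith
        exact lt_of_le_of_lt (hdle _ σ) (lt_of_lt_of_le h2 h3)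
      exact (infDist_lt_iff ⟨0, (Z σ).zero_mem⟩).1 h1
    choose z hzmem hzdist using hsel
    set g : {σ : Ordinal // σ < κ.ord} → ℕ → X := fun σ n => u (n + 1) - u n - z σ n with hg
    have hgnorm : ∀ σ n, ‖g σ n‖ ≤ 3 * (2⁻¹ : ℝ) ^ n := by
      intro σ n
      have := hzdist σ n
      rw [dist_eq_norm] at this
      exact this.le
    have hsummable : ∀ σ, Summable (g σ) := fun σ =>
      Summable.of_norm_bounded
        ((summable_geometric_of_lt_one (by norm_num) (by norm_num)).mul_left 3) (hgnorm σ)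
    set v : {σ : Ordinal // σ < κ.ord} → X := fun σ => u 0 + ∑' n, g σ n with hv
    have htail : ∀ σ N, ‖∑' n, g σ (n + N)‖ ≤ 6 * (2⁻¹ : ℝ) ^ N := by
      intro σ N
      have h0 : HasSum (fun n : ℕ => (2⁻¹ : ℝ) ^ n) (1 - 2⁻¹)⁻¹ :=
        hasSum_geometric_of_lt_one (by norm_num) (by norm_num)
      have h1 : HasSum (fun n : ℕ => 3 * (2⁻¹ : ℝ) ^ (n + N)) (6 * (2⁻¹ : ℝ) ^ N) := by
        have h2 := h0.mul_left (3 * (2⁻¹ : ℝ) ^ N)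
        have heq : (fun n : ℕ => 3 * (2⁻¹ : ℝ) ^ N * (2⁻¹ : ℝ) ^ n)
            = fun n : ℕ => 3 * (2⁻¹ : ℝ) ^ (n + N) := by
          funext n
          rw [pow_add]
          ring
        rw [heq] at h2
        have hval : 3 * (2⁻¹ : ℝ) ^ N * (1 - 2⁻¹)⁻¹ = 6 * (2⁻¹ : ℝ) ^ N := by norm_num; ring
        rwa [hval] at h2
      exact tsum_of_norm_bounded h1 fun n => hgnorm σ (n + N)
    have hkey : ∀ σ N, infDist (v σ - u N) (Z σ : Set X) ≤ 6 * (2⁻¹ : ℝ) ^ N := by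
      intro σ N
      have hsplit : (∑ n ∈ Finset.range N, g σ n) + ∑' n, g σ (n + N) = ∑' n, g σ n :=
        (hsummable σ).sum_add_tsum_nat_add N
      have htel : ∑ n ∈ Finset.range N, (u (n + 1) - u n) = u N - u 0 :=
        Finset.sum_range_sub u N
      have hsum_g : ∑ n ∈ Finset.range N, g σ n
          = (u N - u 0) - ∑ n ∈ Finset.range N, z σ n := by
        rw [← htel, ← Finset.sum_sub_distrib]
      have hdecomp : v σ - u N
          = (∑' n, g σ (n + N)) + (-∑ n ∈ Finset.range N, z σ n) := by
        rw [hv]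
        simp only
        rw [← hsplit, hsum_g]
        abel
      rw [hdecomp, myInfDist_add_mem (Z σ)
        ((Z σ).neg_mem ((Z σ).sum_mem fun n _ => hzmem σ n))]
      calc infDist (∑' n, g σ (n + N)) (Z σ : Set X)
          ≤ dist (∑' n, g σ (n + N)) 0 := infDist_le_dist_of_mem (Z σ).zero_mem
        _ = ‖∑' n, g σ (n + N)‖ := dist_zero_right _
        _ ≤ 6 * (2⁻¹ : ℝ) ^ N := htail σ N
    have hvmem : ∀ α β, α < β → v β - v α ∈ Z α := by
      intro α β hab
      have hb : ∀ N : ℕ, infDist (v β - v α) (Z α : Set X) ≤ 12 * (2⁻¹ : ℝ) ^ N := by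
        intro N
        have h1 : infDist (v β - u N) (Z α : Set X) ≤ 6 * (2⁻¹ : ℝ) ^ N :=
          le_trans (infDist_le_infDist_of_subset (fun x hx => (hnest α β hab).le hx)
            ⟨0, (Z β).zero_mem⟩) (hkey β N)
        have h2 : infDist (u N - v α) (Z α : Set X) ≤ 6 * (2⁻¹ : ℝ) ^ N := by
          rw [show u N - v α = -(v α - u N) by abel, myInfDist_neg]
          exact hkey α N
        calc infDist (v β - v α) (Z α : Set X)
            = infDist ((v β - u N) + (u N - v α)) (Z α : Set X) := by rw [sub_add_sub_cancel]
          _ ≤ infDist (v β - u N) (Z α : Set X) + infDist (u N - v α) (Z α : Set X) :=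
              myInfDist_add (Z α) _ _
          _ ≤ 12 * (2⁻¹ : ℝ) ^ N := by linarith
      have ht : Tendsto (fun N : ℕ => 12 * (2⁻¹ : ℝ) ^ N) atTop (nhds (12 * 0)) :=
        (tendsto_pow_atTop_nhds_zero_of_lt_one (by norm_num) (by norm_num)).const_mul 12
      rw [mul_zero] at ht
      have h0 : infDist (v β - v α) (Z α : Set X) ≤ 0 := ge_of_tendsto' ht hb
      have hzero : infDist (v β - v α) (Z α : Set X) = 0 := le_antisymm h0 infDist_nonneg
      exact ((hclosed α).mem_iff_infDist_zero ⟨0, (Z α).zero_mem⟩).2 hzero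
    obtain ⟨y, hy⟩ := hcap (fun σ => (v σ + ·) '' (Z σ : Set X))
      (fun σ => ⟨v σ, Z σ, hclosed σ, rfl⟩)
      (by
        intro α β hab x hx
        obtain ⟨w, hw, rfl⟩ := hx
        exact ⟨(v β - v α) + w, (Z α).add_mem (hvmem α β hab) ((hnest α β hab).le hw),
          by show v α + ((v β - v α) + w) = v β + w; abel⟩)
    refine ⟨y, fun N => ?_⟩
    rw [hFdef]
    refine ciSup_le fun σ => ?_
    obtain ⟨w, hw, hwy⟩ := mem_iInter.1 hy σ
    have hrw : u N - y = (u N - v σ) + (-w) := by rw [← hwy]; beta_reduce; abel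
    rw [hrw, myInfDist_add_mem (Z σ) ((Z σ).neg_mem hw),
      show u N - v σ = -(v σ - u N) by abel, myInfDist_neg]
    refine (hkey σ N).trans ?_
    have : (0:ℝ) ≤ 2⁻¹ ^ N := by positivity
    linarith
  obtain ⟨C, hC, hCb⟩ := exists_bound_of_complete_norm F
    (fun c x => ciSup_le fun σ =>
      (myInfDist_smul (Z σ) c x).trans (mul_le_mul_of_nonneg_left (hdle x σ) (norm_nonneg c)))
    hfle hcomp
  apply Bornology.IsBounded.subset (Metric.isBounded_closedBall (x := (0 : X)) (r := C))
  intro x hx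
  have h1 : ∀ σ, infDist x (Z σ : Set X) ≤ 1 := by
    intro σ
    obtain ⟨b, hb, w, hw, rfl⟩ := Set.mem_add.1 (mem_iInter.1 hx σ)
    calc infDist (b + w) (Z σ : Set X) ≤ dist (b + w) w := infDist_le_dist_of_mem hw
      _ = ‖b‖ := by rw [dist_eq_norm]; simp
      _ ≤ 1 := by simpa [mem_closedBall, dist_zero_right] using hb
  have h2 : F x ≤ 1 := ciSup_le h1
  have h3 : ‖x‖ ≤ C := by
    refine (hCb x).trans ?_
    calc C * F x ≤ C * 1 := mul_le_mul_of_nonneg_left h2 hC.le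
      _ = C := mul_one C
  rw [mem_closedBall, dist_zero_right]
  exact h3
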